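/- Let Z_• be a green nonlinear stability function. For every t₀ ∈ ℝ, the pair (S_Z(−∞,t₀], S_Z(t₀,∞)) is a torsion pair in mod-Λ: Hom(A,B)=0 for A in the first class and B in the second, A belongs to the first class iff A has no nonzero quotient in the second, and B belongs to the second class iff it has no nonzero submodule in the first. -/

import Mathlib

open scoped BigOperators

noncomputable section

/-- Dot product of a real vector with a dimension vector. -/
def dprod {n : ℕ} (x : Fin n → ℝ) (v : Fin n → ℕ) : ℝ := ∑ i, x i * (v i : ℝ)

/-- Slope of a dimension vector with respect to a linear stability function
`Z(x) = a·x + i b·x`. -/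
def zslope {n : ℕ} (a b : Fin n → ℝ) (v : Fin n → ℕ) : ℝ := dprod a v / dprod b v

/-- The semistability set `D(M)` of a module `M`, with respect to a dimension-vector
assignment `d`. -/
def DSet {Λ : Type} [Ring Λ] {n : ℕ}
    (d : (N : Type) → [AddCommGroup N] → [Module Λ N] → Fin n → ℕ)
    (M : Type) [AddCommGroup M] [Module Λ M] : Set (Fin n → ℝ) :=
  {x | dprod x (d M) = 0 ∧ ∀ M' : Submodule Λ M, dprod x (d ↥M') ≤ 0}

/-- A module is Schurian if it is nonzero and every nonzero endomorphism is invertible,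
i.e. its endomorphism ring is a division algebra. -/
def Schurian (Λ : Type) [Ring Λ] (M : Type) [AddCommGroup M] [Module Λ M] : Prop :=
  (∃ y : M, y ≠ 0) ∧ ∀ f : M →ₗ[Λ] M, f ≠ 0 → Function.Bijective f

/-- `X` belongs to `E(M)`: `X` admits a finite filtration with all subquotients
isomorphic to `M`. -/
def IsFiltered (Λ : Type) [Ring Λ] (M : Type) [AddCommGroup M] [Module Λ M]
    (X : Type) [AddCommGroup X] [Module Λ X] : Prop :=
  ∃ (k : ℕ) (F : Fin (k + 1) → Submodule Λ X), Monotone F ∧ F 0 = ⊥ ∧ F (Fin.last k) = ⊤ ∧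
    ∀ i : Fin k, Nonempty
      ((↥(F i.succ) ⧸ Submodule.comap (F i.succ).subtype (F i.castSucc)) ≃ₗ[Λ] M)

/-- Slope at time `t` of a dimension vector, for a nonlinear stability function
`Z_t(x) = a_t·x + i b_t·x`. -/
def muZ {n : ℕ} (a b : ℝ → Fin n → ℝ) (t : ℝ) (v : Fin n → ℕ) : ℝ :=
  dprod (a t) v / dprod (b t) v

/-- `M` is `Z_t`-semistable: every nonzero submodule has zslope at least that of `M`. -/
def Semistable {Λ : Type} [Ring Λ] {n : ℕ}
    (d : (N : Type) → [AddCommGroup N] → [Module Λ N] → Fin n → ℕ)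
    (a b : ℝ → Fin n → ℝ) (t : ℝ)
    (M : Type) [AddCommGroup M] [Module Λ M] : Prop :=
  ∀ M' : Submodule Λ M, M' ≠ ⊥ → muZ a b t (d M) ≤ muZ a b t (d ↥M')

/-- The nonlinear stability function given by `(a, b)` is green (for `Λ`): at every
semistable pair `(N, t₀)` (with `N` a nonzero finite-length `Λ`-module, `N`
`Z_{t₀}`-semistable and `μ_{t₀}(N) = t₀`), the derivative of `t ↦ μ_t(N)` at `t₀`
is `< 1`. -/
def ZGreen {Λ : Type} [Ring Λ] {n : ℕ}
    (d : (N : Type) → [AddCommGroup N] → [Module Λ N] → Fin n → ℕ)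
    (a b : ℝ → Fin n → ℝ) : Prop :=
  ∀ (N : Type) [AddCommGroup N] [Module Λ N] [IsNoetherian Λ N] [IsArtinian Λ N] (t₀ : ℝ),
    (∃ y : N, y ≠ 0) → Semistable d a b t₀ N → muZ a b t₀ (d N) = t₀ →
      deriv (fun t => muZ a b t (d N)) t₀ < 1

/-- `t₀(M)`: the smallest `t` with `μ_t(M) = t` (as an infimum). -/
def tzero {n : ℕ} (a b : ℝ → Fin n → ℝ) (v : Fin n → ℕ) : ℝ := sInf {t | muZ a b t v = t}

/-- `t₁(M)`: the smallest value of `t₀(M')` over nonzero submodules `M' ⊆ M`. -/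
def tone {Λ : Type} [Ring Λ] {n : ℕ}
    (d : (N : Type) → [AddCommGroup N] → [Module Λ N] → Fin n → ℕ)
    (a b : ℝ → Fin n → ℝ)
    (M : Type) [AddCommGroup M] [Module Λ M] : ℝ :=
  sInf {s : ℝ | ∃ M' : Submodule Λ M, M' ≠ ⊥ ∧ s = tzero a b (d ↥M')}

/-- `X` belongs to `S_Z(I)`: `X` has a Harder–Narasimhan filtration whose strictly
increasing sequence of times all lie in `I`, with `k`-th subquotient `Z_{t_k}`-semistable
of slope `μ_{t_k} = t_k`. -/
def HNin {Λ : Type} [Ring Λ] {n : ℕ}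
    (d : (N : Type) → [AddCommGroup N] → [Module Λ N] → Fin n → ℕ)
    (a b : ℝ → Fin n → ℝ) (I : Set ℝ)
    (X : Type) [AddCommGroup X] [Module Λ X] : Prop :=
  ∃ (m : ℕ) (F : Fin (m + 1) → Submodule Λ X) (ts : Fin m → ℝ),
    StrictMono F ∧ F 0 = ⊥ ∧ F (Fin.last m) = ⊤ ∧ StrictMono ts ∧ (∀ i, ts i ∈ I) ∧
    ∀ i : Fin m,
      Semistable d a b (ts i)
        (↥(F i.succ) ⧸ Submodule.comap (F i.succ).subtype (F i.castSucc)) ∧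
      muZ a b (ts i)
        (d (↥(F i.succ) ⧸ Submodule.comap (F i.succ).subtype (F i.castSucc))) = ts i

section Stmt10Aux
open Set

variable {n : ℕ}

lemma dprod_nonneg {x : Fin n → ℝ} (hx : ∀ i, 0 < x i) (w : Fin n → ℕ) : 0 ≤ dprod x w :=
  Finset.sum_nonneg fun i _ => mul_nonneg (hx i).le (by positivity)

lemma dprod_pos {x : Fin n → ℝ} (hx : ∀ i, 0 < x i) {w : Fin n → ℕ} (hw : w ≠ 0) :
    0 < dprod x w := by
  have : ∃ i, w i ≠ 0 := by
    by_contra h; push_neg at h; exact hw (funext fun i => h i)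
  obtain ⟨i, hi⟩ := this
  have h1 : (0:ℝ) < x i * (w i : ℝ) := by
    have : 0 < (w i : ℝ) := by exact_mod_cast Nat.pos_of_ne_zero hi
    exact mul_pos (hx i) this
  refine Finset.sum_pos' (fun j _ => mul_nonneg (hx j).le (by positivity)) ⟨i, Finset.mem_univ i, h1⟩

lemma dprod_add (x : Fin n → ℝ) (v w : Fin n → ℕ) :
    dprod x (v + w) = dprod x v + dprod x w := by
  unfold dprod
  rw [← Finset.sum_add_distrib]
  refine Finset.sum_congr rfl fun i _ => ?_
  simp [Pi.add_apply]; push_cast; ring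

variable (a b : ℝ → Fin n → ℝ)

lemma diff_dprod (hC1 : ∀ i, ContDiff ℝ 1 (fun t => a t i)) (w : Fin n → ℕ) :
    Differentiable ℝ (fun t => dprod (a t) w) := by
  unfold dprod
  apply Differentiable.fun_sum
  intro i _
  exact ((hC1 i).differentiable one_ne_zero).mul_const _

lemma muZ_differentiable (hC1a : ∀ i, ContDiff ℝ 1 (fun t => a t i))
    (hC1b : ∀ i, ContDiff ℝ 1 (fun t => b t i)) (hbpos : ∀ t i, 0 < b t i)
    {w : Fin n → ℕ} (hw : w ≠ 0) : Differentiable ℝ (fun t => muZ a b t w) := by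
  unfold muZ
  exact (diff_dprod a hC1a w).div (diff_dprod b hC1b w)
    (fun t => (dprod_pos (hbpos t) hw).ne')

lemma muZ_continuous (hC1a : ∀ i, ContDiff ℝ 1 (fun t => a t i))
    (hC1b : ∀ i, ContDiff ℝ 1 (fun t => b t i)) (hbpos : ∀ t i, 0 < b t i)
    {w : Fin n → ℕ} (hw : w ≠ 0) : Continuous (fun t => muZ a b t w) :=
  (muZ_differentiable a b hC1a hC1b hbpos hw).continuous

/-- The structural facts about the first crossing time `tzero`. -/
lemma tzero_spec (hC1a : ∀ i, ContDiff ℝ 1 (fun t => a t i))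
    (hC1b : ∀ i, ContDiff ℝ 1 (fun t => b t i)) (hbpos : ∀ t i, 0 < b t i)
    (hconst : ∃ T : ℝ, 0 < T ∧ (∀ t, T ≤ t → a t = a T ∧ b t = b T) ∧
      (∀ t, t ≤ -T → a t = a (-T) ∧ b t = b (-T)))
    {w : Fin n → ℕ} (hw : w ≠ 0) :
    muZ a b (tzero a b w) w = tzero a b w ∧
      ∀ t, t < tzero a b w → t < muZ a b t w := by
  obtain ⟨T, hT, hTa, hTb⟩ := hconst
  set g : ℝ → ℝ := fun t => muZ a b t w - t with hg
  have hgc : Continuous g := (muZ_continuous a b hC1a hC1b hbpos hw).sub continuous_id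
  have hlow : ∀ t, t ≤ -T → muZ a b t w = muZ a b (-T) w := by
    intro t ht
    obtain ⟨ha1, hb1⟩ := hTb t ht
    simp only [muZ, ha1, hb1]
  have hhigh : ∀ t, T ≤ t → muZ a b t w = muZ a b T w := by
    intro t ht
    obtain ⟨ha1, hb1⟩ := hTa t ht
    simp only [muZ, ha1, hb1]
  set cm : ℝ := muZ a b (-T) w
  set cp : ℝ := muZ a b T w
  set u : ℝ := min (-T) cm - 1 with hu
  set v : ℝ := max T cp + 1 with hv
  have hgu : 0 < g u := by
    have h1 : muZ a b u w = cm := hlow u (by simp [hu]; nlinarith [min_le_left (-T) cm])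
    simp only [hg, h1]
    have := min_le_right (-T) cm
    simp only [hu]; linarith
  have hgv : g v < 0 := by
    have h1 : muZ a b v w = cp := hhigh v (by simp [hv]; nlinarith [le_max_left T cp])
    simp only [hg, h1]
    have := le_max_right T cp
    simp only [hv]; linarith
  -- lower bounds for crossings
  have hbdd : ∀ t, g t = 0 → u + 1 ≤ t := by
    intro t ht
    by_contra hc
    push_neg at hc
    have htT : t ≤ -T := by
      have := min_le_left (-T) cm; simp only [hu] at hc; linarith
    have : muZ a b t w = cm := hlow t htT
    have : t = cm := by simp only [hg] at ht; linarith
    have := min_le_right (-T) cm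
    simp only [hu] at hc; linarith
  have hne : {t | muZ a b t w = t}.Nonempty := by
    have huv : u ≤ v := by
      have h1 := min_le_left (-T) cm
      have h2 := le_max_left T cp
      simp only [hu, hv]; linarith
    have : (0:ℝ) ∈ Icc (g v) (g u) := ⟨hgv.le, hgu.le⟩
    obtain ⟨t, _, ht⟩ := intermediate_value_Icc' huv hgc.continuousOn this
    exact ⟨t, by simpa [hg, sub_eq_zero] using ht⟩
  have hclosed : IsClosed {t | muZ a b t w = t} :=
    isClosed_eq (muZ_continuous a b hC1a hC1b hbpos hw) continuous_id
  have hbb : BddBelow {t | muZ a b t w = t} := by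
    refine ⟨u, fun t ht => ?_⟩
    have : g t = 0 := by simp only [hg, sub_eq_zero]; exact ht
    linarith [hbdd t this]
  have hmem : tzero a b w ∈ {t | muZ a b t w = t} := by
    unfold tzero
    exact hclosed.csInf_mem hne hbb
  refine ⟨hmem, ?_⟩
  intro t ht
  by_contra hc
  push_neg at hc
  -- then g t ≤ 0; cannot have g t = 0 since t < sInf
  have hgt : g t < 0 := by
    rcases lt_or_eq_of_le (by simp only [hg]; linarith : g t ≤ 0) with h | h
    · exact h
    · exfalso
      have : tzero a b w ≤ t := csInf_le hbb (by simp only [hg, sub_eq_zero] at h; exact h)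
      linarith
  -- find a crossing below t, contradicting sInf
  have hut : min u (t-1) ≤ t := le_trans (min_le_right _ _) (by linarith)
  have hgu2 : 0 < g (min u (t-1)) := by
    rcases le_or_gt u (t-1) with h | h
    · rwa [min_eq_left h]
    · rw [min_eq_right h.le]
      have h1 : muZ a b (t-1) w = cm := by
        apply hlow
        have := min_le_left (-T) cm; simp only [hu] at h; linarith
      simp only [hg, h1]
      have := min_le_right (-T) cm; simp only [hu] at h; linarith
  have : (0:ℝ) ∈ Icc (g t) (g (min u (t-1))) := ⟨hgt.le, hgu2.le⟩
  obtain ⟨s, hs, hs0⟩ := intermediate_value_Icc' hut hgc.continuousOn this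
  have hsmem : s ∈ {t | muZ a b t w = t} := by simpa [hg, sub_eq_zero] using hs0
  have : tzero a b w ≤ s := csInf_le hbb hsmem
  have : s ≤ t := hs.2
  linarith

set_option linter.unusedSectionVars false
set_option maxHeartbeats 800000

/-- First return to 0 of a continuous function. -/
lemma first_return {h : ℝ → ℝ} (hc : Continuous h) {x y : ℝ} (hxy : x < y)
    (hx : h x < 0) (hy : 0 ≤ h y) :
    ∃ σ, x < σ ∧ σ ≤ y ∧ h σ = 0 ∧ ∀ w, x ≤ w → w < σ → h w < 0 := by
  set S : Set ℝ := {w | w ∈ Icc x y ∧ 0 ≤ h w} with hS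
  have hSne : S.Nonempty := ⟨y, ⟨hxy.le, le_rfl⟩, hy⟩
  have hSbdd : BddBelow S := ⟨x, fun w hw => hw.1.1⟩
  have hSclosed : IsClosed S := by
    have h1 : IsClosed {w : ℝ | 0 ≤ h w} := isClosed_le continuous_const hc
    exact (isClosed_Icc.inter h1 : IsClosed (Icc x y ∩ {w | 0 ≤ h w}))
  set σ := sInf S with hσ
  have hmem : σ ∈ S := hSclosed.csInf_mem hSne hSbdd
  have hxσ : x < σ := by
    rcases lt_or_eq_of_le hmem.1.1 with h1 | h1
    · exact h1
    · exact absurd (h1 ▸ hmem.2) (not_le.mpr hx)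
  have hneg : ∀ w, x ≤ w → w < σ → h w < 0 := by
    intro w hxw hwσ
    by_contra hcon
    push_neg at hcon
    have : w ∈ S := ⟨⟨hxw, hwσ.le.trans hmem.1.2⟩, hcon⟩
    exact absurd (csInf_le hSbdd this) (not_le.mpr hwσ)
  refine ⟨σ, hxσ, hmem.1.2, ?_, hneg⟩
  refine le_antisymm ?_ hmem.2
  have hsub : Ico x σ ⊆ {w : ℝ | h w ≤ 0} := fun w hw => (hneg w hw.1 hw.2).le
  have hcl : σ ∈ closure (Ico x σ) := by
    rw [closure_Ico hxσ.ne]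
    exact ⟨hxσ.le, le_rfl⟩
  have : σ ∈ {w : ℝ | h w ≤ 0} :=
    (isClosed_le hc continuous_const).closure_subset ((closure_mono hsub) hcl)
  exact this

variable {Λ : Type} [Ring Λ]
variable (d : (N : Type) → [AddCommGroup N] → [Module Λ N] → Fin n → ℕ)
lemma exists_ne_zero_of_ne_bot {N : Type} [AddCommGroup N] [Module Λ N]
    {I : Submodule Λ N} (h : I ≠ ⊥) : ∃ y : ↥I, y ≠ 0 := by
  obtain ⟨y, hyI, hy⟩ := Submodule.exists_mem_ne_zero_of_ne_bot h
  exact ⟨⟨y, hyI⟩, fun hc => hy (by simpa using congrArg Subtype.val hc)⟩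

structure GreenPack {Λ : Type} [Ring Λ] {n : ℕ}
    (d : (N : Type) → [AddCommGroup N] → [Module Λ N] → Fin n → ℕ)
    (a b : ℝ → Fin n → ℝ) : Prop where
  hiso : ∀ (N N' : Type) [AddCommGroup N] [Module Λ N] [AddCommGroup N'] [Module Λ N']
      [IsNoetherian Λ N] [IsArtinian Λ N], (N ≃ₗ[Λ] N') → d N = d N'
  hadd : ∀ (N : Type) [AddCommGroup N] [Module Λ N] [IsNoetherian Λ N] [IsArtinian Λ N]
      (A : Submodule Λ N), d ↥A + d (N ⧸ A) = d N
  hzero : ∀ (N : Type) [AddCommGroup N] [Module Λ N] [IsNoetherian Λ N] [IsArtinian Λ N],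
      (d N = 0 ↔ ∀ y : N, y = 0)
  hbpos : ∀ t i, 0 < b t i
  hC1a : ∀ i, ContDiff ℝ 1 (fun t => a t i)
  hC1b : ∀ i, ContDiff ℝ 1 (fun t => b t i)
  hconst : ∃ T : ℝ, 0 < T ∧ (∀ t, T ≤ t → a t = a T ∧ b t = b T) ∧
      (∀ t, t ≤ -T → a t = a (-T) ∧ b t = b (-T))
  hgreen : ZGreen d a b

variable (P : GreenPack d a b)

include P

lemma d_ne_zero (N : Type) [AddCommGroup N] [Module Λ N] [IsNoetherian Λ N] [IsArtinian Λ N]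
    (hne : ∃ y : N, y ≠ 0) : d N ≠ 0 := by
  intro h
  obtain ⟨y, hy⟩ := hne
  exact hy ((P.hzero N).mp h y)

lemma d_sub_ne_zero {N : Type} [AddCommGroup N] [Module Λ N] [IsNoetherian Λ N] [IsArtinian Λ N]
    {I : Submodule Λ N} (h : I ≠ ⊥) : d ↥I ≠ 0 :=
  d_ne_zero a b d P ↥I (exists_ne_zero_of_ne_bot h)

lemma green_local (N : Type) [AddCommGroup N] [Module Λ N] [IsNoetherian Λ N] [IsArtinian Λ N]
    (t : ℝ) (hne : ∃ y : N, y ≠ 0) (hss : Semistable d a b t N) (hmu : muZ a b t (d N) = t) :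
    ∃ δ, 0 < δ ∧ (∀ u, t < u → u < t + δ → muZ a b u (d N) < u) ∧
             (∀ u, t - δ < u → u < t → u < muZ a b u (d N)) := by
  have hw : d N ≠ 0 := d_ne_zero a b d P N hne
  set f : ℝ → ℝ := fun u => muZ a b u (d N) with hf
  have hdf : HasDerivAt f (deriv f t) t :=
    ((muZ_differentiable a b P.hC1a P.hC1b P.hbpos hw) t).hasDerivAt
  have hlt : deriv f t < 1 := P.hgreen N t hne hss hmu
  set g : ℝ → ℝ := fun u => f u - u with hg
  have hdg : HasDerivAt g (deriv f t - 1) t := hdf.sub (hasDerivAt_id t)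
  have hgneg : deriv f t - 1 < 0 := by linarith
  have hslope := hasDerivAt_iff_tendsto_slope.mp hdg
  have hev : ∀ᶠ u in nhdsWithin t {t}ᶜ, slope g t u < 0 :=
    hslope.eventually_lt_const hgneg
  rw [Filter.eventually_iff, Metric.mem_nhdsWithin_iff] at hev
  obtain ⟨δ, hδ, hball⟩ := hev
  have hgt : g t = 0 := by simp [hg, hf, hmu]
  have key : ∀ u, u ≠ t → dist u t < δ → g u / (u - t) < 0 := by
    intro u hu hd
    have h1 : slope g t u < 0 := hball ⟨Metric.mem_ball.mpr hd, hu⟩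
    rwa [slope_def_field, hgt, sub_zero] at h1
  refine ⟨δ, hδ, ?_, ?_⟩
  · intro u h1 h2
    have hd : dist u t < δ := by rw [Real.dist_eq, abs_of_pos (by linarith)]; linarith
    have hk := key u (by intro h; rw [h] at h1; exact lt_irrefl _ h1) hd
    rcases div_neg_iff.mp hk with ⟨_, h⟩ | ⟨h, _⟩
    · linarith
    · simp only [hg, hf] at h; linarith
  · intro u h1 h2
    have hd : dist u t < δ := by rw [Real.dist_eq, abs_of_neg (by linarith)]; linarith
    have hk := key u (by intro h; rw [h] at h2; exact lt_irrefl _ h2) hd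
    rcases div_neg_iff.mp hk with ⟨h, _⟩ | ⟨_, h⟩
    · simp only [hg, hf] at h; linarith
    · linarith

lemma d_map_subtype {N : Type} [AddCommGroup N] [Module Λ N] [IsNoetherian Λ N] [IsArtinian Λ N]
    (I : Submodule Λ N) (Q : Submodule Λ ↥I) : d ↥Q = d ↥(Q.map I.subtype) :=
  P.hiso ↥Q ↥(Q.map I.subtype) (Submodule.equivMapOfInjective I.subtype I.injective_subtype Q)

lemma map_subtype_ne_bot {N : Type} [AddCommGroup N] [Module Λ N]
    {I : Submodule Λ N} {Q : Submodule Λ ↥I} (hQ : Q ≠ ⊥) : Q.map I.subtype ≠ ⊥ := by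
  obtain ⟨y, hy⟩ := exists_ne_zero_of_ne_bot hQ
  rw [Submodule.ne_bot_iff]
  refine ⟨(y : N), Submodule.mem_map.mpr ⟨y, y.2, rfl⟩, ?_⟩
  intro h
  exact hy (Subtype.ext (Subtype.ext h))
omit P in
lemma seesaw_aux {θ1 θ2 r1 r2 s : ℝ} (h1 : 0 < r1) (h2 : 0 < r2)
    (hK : s ≤ θ1 / r1) (hS : (θ1 + θ2) / (r1 + r2) = s) : θ2 / r2 ≤ s := by
  rw [le_div_iff₀ h1] at hK
  rw [div_eq_iff (by positivity : (0:ℝ) < r1 + r2).ne'] at hS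
  rw [div_le_iff₀ h2]
  nlinarith

omit P in
lemma seesaw_aux2 {θ1 θ2 r1 r2 s : ℝ} (h1 : 0 < r1) (h2 : 0 < r2)
    (hK : θ1 / r1 = s) (hS : s ≤ (θ1 + θ2) / (r1 + r2)) : s ≤ θ2 / r2 := by
  rw [div_eq_iff h1.ne'] at hK
  rw [le_div_iff₀ (by positivity)] at hS
  rw [le_div_iff₀ h2]
  nlinarith

lemma dprod_d_add (N : Type) [AddCommGroup N] [Module Λ N] [IsNoetherian Λ N] [IsArtinian Λ N]
    (A : Submodule Λ N) (x : Fin n → ℝ) :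
    dprod x (d N) = dprod x (d ↥A) + dprod x (d (N ⧸ A)) := by
  rw [← P.hadd N A, dprod_add]

lemma mu_ge_of_le_tzero {w : Fin n → ℕ} (hw : w ≠ 0) {t : ℝ} (h : t ≤ tzero a b w) :
    t ≤ muZ a b t w := by
  obtain ⟨h1, h2⟩ := tzero_spec a b P.hC1a P.hC1b P.hbpos P.hconst hw
  rcases eq_or_lt_of_le h with he | hl
  · rw [← he] at h1; exact le_of_eq h1.symm
  · exact (h2 t hl).le

lemma Lstar (N : Type) [AddCommGroup N] [Module Λ N] [IsNoetherian Λ N] [IsArtinian Λ N]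
    (t : ℝ) (H : ∀ I : Submodule Λ N, I ≠ ⊥ → t ≤ muZ a b t (d ↥I)) :
    ∀ I : Submodule Λ N, I ≠ ⊥ → t ≤ tzero a b (d ↥I) := by
  intro I
  induction I using WellFoundedLT.induction with
  | _ I IH =>
  intro hI
  by_contra hcon
  push_neg at hcon
  have hdI : d ↥I ≠ 0 := d_sub_ne_zero a b d P hI
  obtain ⟨hcross, hbefore⟩ := tzero_spec a b P.hC1a P.hC1b P.hbpos P.hconst hdI
  set τ := tzero a b (d ↥I) with hτ
  have ssAt : ∀ σ, σ ≤ t → muZ a b σ (d ↥I) = σ → Semistable d a b σ ↥I := by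
    intro σ hσt hσμ Q hQ
    have hdQ : d ↥Q = d ↥(Q.map I.subtype) := d_map_subtype a b d P I Q
    have hQ' : Q.map I.subtype ≠ ⊥ := map_subtype_ne_bot a b d P hQ
    rcases eq_or_lt_of_le (Submodule.map_subtype_le I Q) with he | hlt
    · rw [hσμ, hdQ, he]
      exact le_of_eq hσμ.symm
    · have hge : t ≤ tzero a b (d ↥(Q.map I.subtype)) := IH _ hlt hQ'
      have hmu : σ ≤ muZ a b σ (d ↥(Q.map I.subtype)) :=
        mu_ge_of_le_tzero a b d P (d_sub_ne_zero a b d P hQ') (le_trans hσt hge)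
      rw [hσμ, hdQ]; exact hmu
  have hne : ∃ y : ↥I, y ≠ 0 := exists_ne_zero_of_ne_bot hI
  have ss1 : Semistable d a b τ ↥I := ssAt τ hcon.le hcross
  obtain ⟨δ, hδ, hright, _⟩ := green_local a b d P ↥I τ hne ss1 hcross
  set x := τ + min δ (t - τ) / 2 with hx
  have hmin : 0 < min δ (t - τ) := lt_min hδ (by linarith)
  have hxt : x < t := by
    have := min_le_right δ (t - τ); simp only [hx]; linarith
  have hxτ : τ < x := by simp only [hx]; linarith
  have hxδ : x < τ + δ := by
    have := min_le_left δ (t - τ); simp only [hx]; linarith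
  have hgx : muZ a b x (d ↥I) < x := hright x hxτ hxδ
  set h : ℝ → ℝ := fun u => muZ a b u (d ↥I) - u with hh
  have hcont : Continuous h :=
    (muZ_continuous a b P.hC1a P.hC1b P.hbpos hdI).sub continuous_id
  obtain ⟨σ, hxσ, hσt, hσ0, hσneg⟩ := first_return hcont hxt
    (by simp only [hh]; linarith) (by simp only [hh]; linarith [H I hI])
  have hσμ : muZ a b σ (d ↥I) = σ := by simp only [hh] at hσ0; linarith
  have ss2 : Semistable d a b σ ↥I := ssAt σ hσt hσμ
  obtain ⟨δ₂, hδ₂, _, hleft⟩ := green_local a b d P ↥I σ hne ss2 hσμ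
  set u := (max x (σ - δ₂) + σ) / 2 with hu
  have hmax : max x (σ - δ₂) < σ := max_lt hxσ (by linarith)
  have hum : max x (σ - δ₂) < u := by simp only [hu]; linarith
  have hu1 : u < σ := by simp only [hu]; linarith
  have hu2 : x ≤ u := le_trans (le_max_left _ _) hum.le
  have hu3 : σ - δ₂ < u := lt_of_le_of_lt (le_max_right _ _) hum
  have hgu : u < muZ a b u (d ↥I) := hleft u hu3 hu1
  have hfin := hσneg u hu2 hu1
  simp only [hh] at hfin; linarith

/-- Every nonzero submodule of a semistable module (at its crossing time `t`)
has first crossing time `≥ t`. -/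
lemma tz_ge_of_ss (N : Type) [AddCommGroup N] [Module Λ N] [IsNoetherian Λ N] [IsArtinian Λ N]
    (t : ℝ) (hss : Semistable d a b t N) (hmu : muZ a b t (d N) = t) :
    ∀ I : Submodule Λ N, I ≠ ⊥ → t ≤ tzero a b (d ↥I) := by
  apply Lstar a b d P
  intro I hI
  exact le_trans (le_of_eq hmu.symm) (hss I hI)
section Transport

variable {X Y : Type} [AddCommGroup X] [Module Λ X] [AddCommGroup Y] [Module Λ Y]

omit P in
/-- Quotient by the kernel is isomorphic to the target, for a surjection. -/
noncomputable def quotEquivOfSurj (ψ : X →ₗ[Λ] Y) (hs : Function.Surjective ψ)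
    (K : Submodule Λ X) (hk : LinearMap.ker ψ = K) : (X ⧸ K) ≃ₗ[Λ] Y :=
  (Submodule.quotEquivOfEq _ _ hk.symm).trans (ψ.quotKerEquivOfSurjective hs)

omit P in
/-- The universal subquotient-comparison lemma. -/
lemma subquot_equiv (g : X →ₗ[Λ] Y) (U V : Submodule Λ X) (W Z : Submodule Λ Y)
    (hmem : ∀ x : ↥V, g ↑x ∈ Z)
    (hker : ∀ x : X, x ∈ V → (g x ∈ W ↔ x ∈ U))
    (hsur : ∀ z : Y, z ∈ Z → ∃ x, x ∈ V ∧ g x = z) :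
    Nonempty ((↥V ⧸ Submodule.comap V.subtype U) ≃ₗ[Λ]
      (↥Z ⧸ Submodule.comap Z.subtype W)) := by
  set f : ↥V →ₗ[Λ] ↥Z ⧸ Submodule.comap Z.subtype W :=
    (Submodule.comap Z.subtype W).mkQ.comp ((g.comp V.subtype).codRestrict Z hmem) with hf
  have hkf : LinearMap.ker f = Submodule.comap V.subtype U := by
    ext x
    simp only [hf, LinearMap.mem_ker, LinearMap.comp_apply, Submodule.mkQ_apply,
      Submodule.Quotient.mk_eq_zero, Submodule.mem_comap, LinearMap.codRestrict_apply,
      Submodule.coe_subtype]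
    exact hker ↑x x.2
  have hsf : Function.Surjective f := by
    intro q
    obtain ⟨z, rfl⟩ := Submodule.Quotient.mk_surjective _ q
    obtain ⟨x, hxV, hxz⟩ := hsur ↑z z.2
    refine ⟨⟨x, hxV⟩, ?_⟩
    simp only [hf, LinearMap.comp_apply, Submodule.mkQ_apply]
    congr 1
    exact Subtype.ext hxz
  exact ⟨quotEquivOfSurj f hsf _ hkf⟩

/-- Transport semistability and slope along a linear equivalence. -/
lemma ss_mu_congr [IsNoetherian Λ X] [IsArtinian Λ X]
    (e : X ≃ₗ[Λ] Y) {t : ℝ} (hss : Semistable d a b t X) (hmu : muZ a b t (d X) = t) :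
    Semistable d a b t Y ∧ muZ a b t (d Y) = t := by
  have hXY : d X = d Y := P.hiso X Y e
  haveI instN : IsNoetherian Λ Y := isNoetherian_of_linearEquiv e
  haveI instA : IsArtinian Λ Y := isArtinian_of_linearEquiv e
  constructor
  · intro Q hQ
    set Q' := Q.map e.symm.toLinearMap with hQ'def
    have hQ'ne : Q' ≠ ⊥ := by
      obtain ⟨y, hyQ, hy⟩ := (Submodule.ne_bot_iff Q).mp hQ
      refine (Submodule.ne_bot_iff Q').mpr ⟨e.symm y, Submodule.mem_map.mpr ⟨y, hyQ, rfl⟩, ?_⟩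
      simpa using hy
    have hdQ : d ↥Q = d ↥Q' :=
      P.hiso ↥Q ↥Q' (Submodule.equivMapOfInjective e.symm.toLinearMap e.symm.injective Q)
    rw [← hXY, hdQ]
    exact hss Q' hQ'ne
  · rw [← hXY]; exact hmu

omit P in
lemma hn_mono {I J : Set ℝ} (hIJ : I ⊆ J) (h : HNin d a b I X) : HNin d a b J X := by
  obtain ⟨m, F, ts, h1, h2, h3, h4, h5, h6⟩ := h
  exact ⟨m, F, ts, h1, h2, h3, h4, fun i => hIJ (h5 i), h6⟩

/-- Transport a HN filtration along a linear equivalence. -/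
lemma hn_congr [IsNoetherian Λ X] [IsArtinian Λ X] (e : X ≃ₗ[Λ] Y) {I : Set ℝ}
    (h : HNin d a b I X) : HNin d a b I Y := by
  obtain ⟨m, F, ts, h1, h2, h3, h4, h5, h6⟩ := h
  refine ⟨m, fun i => (F i).map e.toLinearMap, ts, ?_, ?_, ?_, h4, h5, ?_⟩
  · intro i j hij
    have hm := Submodule.map_mono (f := e.toLinearMap) (le_of_lt (h1 hij))
    refine lt_of_le_of_ne hm ?_
    intro hc
    exact (h1 hij).ne (Submodule.map_injective_of_injective (f := e.toLinearMap) e.injective hc)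
  · simp only [h2, Submodule.map_bot]
  · simp only [h3, Submodule.map_top, LinearEquiv.range]
  · intro i
    obtain ⟨hss, hmu⟩ := h6 i
    obtain ⟨eq⟩ := subquot_equiv e.toLinearMap (F i.castSucc) (F i.succ)
      ((F i.castSucc).map e.toLinearMap) ((F i.succ).map e.toLinearMap)
      (fun x => Submodule.mem_map.mpr ⟨↑x, x.2, rfl⟩)
      (fun x _ => by
        constructor
        · intro hx
          obtain ⟨x', hx', hex⟩ := Submodule.mem_map.mp hx
          rwa [← e.injective hex]
        · intro hx; exact Submodule.mem_map.mpr ⟨x, hx, rfl⟩)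
      (fun z hz => by
        obtain ⟨x, hx, rfl⟩ := Submodule.mem_map.mp hz
        exact ⟨x, hx, rfl⟩)
    exact ss_mu_congr a b d P eq hss hmu

end Transport
section Trunc

variable {X Y : Type} [AddCommGroup X] [Module Λ X] [AddCommGroup Y] [Module Λ Y]

omit P in
lemma comap_subtype_strict {V₀ U V : Submodule Λ X}
    (hUV : U < V) (hV : V ≤ V₀) :
    Submodule.comap V₀.subtype U < Submodule.comap V₀.subtype V := by
  refine lt_of_le_of_ne (Submodule.comap_mono hUV.le) ?_
  intro he
  obtain ⟨x, hxV, hxU⟩ := SetLike.exists_of_lt hUV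
  have hxV₀ : x ∈ V₀ := hV hxV
  have hmem : (⟨x, hxV₀⟩ : ↥V₀) ∈ Submodule.comap V₀.subtype V := hxV
  rw [← he] at hmem
  exact hxU hmem

omit P in
lemma comap_surj_strict (q : X →ₗ[Λ] Y) (hq : Function.Surjective q)
    {U V : Submodule Λ Y} (hUV : U < V) :
    Submodule.comap q U < Submodule.comap q V := by
  refine lt_of_le_of_ne (Submodule.comap_mono hUV.le) ?_
  intro he
  have h2 := congrArg (Submodule.map q) he
  rw [Submodule.map_comap_eq_of_surjective hq, Submodule.map_comap_eq_of_surjective hq] at h2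
  exact hUV.ne h2

omit P in
lemma map_mkQ_strict {K U V : Submodule Λ X}
    (hKU : K ≤ U) (hUV : U < V) : Submodule.map K.mkQ U < Submodule.map K.mkQ V := by
  refine lt_of_le_of_ne (Submodule.map_mono hUV.le) ?_
  intro he
  have h1 : Submodule.comap K.mkQ (Submodule.map K.mkQ U) = U := by
    rw [Submodule.comap_map_eq, Submodule.ker_mkQ, sup_eq_left.mpr hKU]
  have h2 : Submodule.comap K.mkQ (Submodule.map K.mkQ V) = V := by
    rw [Submodule.comap_map_eq, Submodule.ker_mkQ, sup_eq_left.mpr (hKU.trans hUV.le)]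
  rw [he, h2] at h1
  exact hUV.ne h1.symm

omit P in
lemma quot_bot_equiv {K V : Submodule Λ X} (hVK : V = K) :
    Nonempty ((↥V ⧸ Submodule.comap V.subtype (⊥ : Submodule Λ X)) ≃ₗ[Λ] ↥K) := by
  subst hVK
  refine ⟨Submodule.quotEquivOfEqBot _ ?_⟩
  rw [Submodule.comap_bot, Submodule.ker_subtype]

/-- Prepend a semistable kernel (at time `τ`) to a HN filtration of the quotient
whose times are all `> τ`. -/
lemma hn_prepend [IsNoetherian Λ X] [IsArtinian Λ X]
    (q : X →ₗ[Λ] Y) (hq : Function.Surjective q) (τ : ℝ)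
    (hker : LinearMap.ker q ≠ ⊥)
    (hssK : Semistable d a b τ ↥(LinearMap.ker q))
    (hmuK : muZ a b τ (d ↥(LinearMap.ker q)) = τ)
    {I : Set ℝ} (hτI : τ ∈ I)
    (h : HNin d a b (I ∩ Set.Ioi τ) Y) : HNin d a b I X := by
  obtain ⟨m, F, ts, h1, h2, h3, h4, h5, h6⟩ := h
  haveI : IsNoetherian Λ Y := isNoetherian_of_linearEquiv (q.quotKerEquivOfSurjective hq)
  haveI : IsArtinian Λ Y := isArtinian_of_linearEquiv (q.quotKerEquivOfSurjective hq)
  refine ⟨m + 1, fun i => Fin.cases ⊥ (fun j => Submodule.comap q (F j)) i,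
    fun i => Fin.cases τ ts i, ?_, ?_, ?_, ?_, ?_, ?_⟩
  · intro i j hij
    induction j using Fin.cases with
    | zero => exact absurd hij (by simp)
    | succ j' =>
      induction i using Fin.cases with
      | zero =>
        simp only [Fin.cases_zero, Fin.cases_succ]
        calc (⊥ : Submodule Λ X) < LinearMap.ker q := bot_lt_iff_ne_bot.mpr hker
        _ ≤ Submodule.comap q (F j') := by
            rw [← Submodule.comap_bot]; exact Submodule.comap_mono bot_le
      | succ i' =>
        simp only [Fin.cases_succ]
        exact comap_surj_strict q hq (h1 (Fin.succ_lt_succ_iff.mp hij))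
  · simp only [Fin.cases_zero]
  · rw [← Fin.succ_last]
    simp only [Fin.cases_succ, h3, Submodule.comap_top]
  · intro i j hij
    induction j using Fin.cases with
    | zero => exact absurd hij (by simp)
    | succ j' =>
      induction i using Fin.cases with
      | zero =>
        simp only [Fin.cases_zero, Fin.cases_succ]
        exact (h5 j').2
      | succ i' =>
        simp only [Fin.cases_succ]
        exact h4 (Fin.succ_lt_succ_iff.mp hij)
  · intro i
    induction i using Fin.cases with
    | zero => simpa using hτI
    | succ j => simpa using (h5 j).1
  · intro i
    induction i using Fin.cases with
    | zero =>
      simp only [Fin.castSucc_zero, Fin.cases_zero, Fin.succ_zero_eq_one]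
      have honeeq : (1 : Fin (m + 2)) = Fin.succ 0 := rfl
      have e2 : (Fin.cases ⊥ (fun j => Submodule.comap q (F j)) (1 : Fin (m + 2)) :
          Submodule Λ X) = LinearMap.ker q := by
        rw [honeeq, Fin.cases_succ, h2, Submodule.comap_bot]
      obtain ⟨eqv⟩ := quot_bot_equiv e2
      exact ss_mu_congr a b d P eqv.symm hssK hmuK
    | succ j =>
      rw [← Fin.succ_castSucc]
      simp only [Fin.cases_succ]
      obtain ⟨hss, hmu⟩ := h6 j
      obtain ⟨eq⟩ := subquot_equiv q (Submodule.comap q (F j.castSucc))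
        (Submodule.comap q (F j.succ)) (F j.castSucc) (F j.succ)
        (fun x => x.2)
        (fun x _ => Iff.rfl)
        (fun z hz => by
          obtain ⟨x, rfl⟩ := hq z
          exact ⟨x, hz, rfl⟩)
      exact ss_mu_congr a b d P eq.symm hss hmu

/-- Drop the last step of a HN filtration. -/
lemma hn_dropLast [IsNoetherian Λ X] [IsArtinian Λ X] {I : Set ℝ}
    (m : ℕ) (F : Fin (m + 2) → Submodule Λ X) (ts : Fin (m + 1) → ℝ)
    (h1 : StrictMono F) (h2 : F 0 = ⊥) (h4 : StrictMono ts) (h5 : ∀ i, ts i ∈ I)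
    (h6 : ∀ i : Fin (m + 1),
      Semistable d a b (ts i)
        (↥(F i.succ) ⧸ Submodule.comap (F i.succ).subtype (F i.castSucc)) ∧
      muZ a b (ts i)
        (d (↥(F i.succ) ⧸ Submodule.comap (F i.succ).subtype (F i.castSucc))) = ts i) :
    HNin d a b I ↥(F (Fin.last m).castSucc) := by
  refine ⟨m, fun i => Submodule.comap (F (Fin.last m).castSucc).subtype (F i.castSucc),
    fun i => ts i.castSucc, ?_, ?_, ?_, ?_, ?_, ?_⟩
  · intro i j hij
    exact comap_subtype_strict (h1 (Fin.castSucc_lt_castSucc_iff.mpr hij))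
      (h1.monotone (Fin.castSucc_le_castSucc_iff.mpr (Fin.le_last j)))
  · show Submodule.comap (F (Fin.last m).castSucc).subtype (F (Fin.castSucc 0)) = ⊥
    rw [Fin.castSucc_zero, h2, Submodule.comap_bot, Submodule.ker_subtype]
  · show Submodule.comap (F (Fin.last m).castSucc).subtype (F (Fin.last m).castSucc) = ⊤
    rw [Submodule.comap_subtype_self]
  · intro i j hij
    exact h4 (Fin.castSucc_lt_castSucc_iff.mpr hij)
  · intro i; exact h5 i.castSucc
  · intro i
    obtain ⟨hss, hmu⟩ := h6 i.castSucc
    obtain ⟨eq⟩ := subquot_equiv (F (Fin.last m).castSucc).subtype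
      (Submodule.comap (F (Fin.last m).castSucc).subtype (F i.castSucc.castSucc))
      (Submodule.comap (F (Fin.last m).castSucc).subtype (F i.succ.castSucc))
      (F i.castSucc.castSucc) (F i.castSucc.succ)
      (fun x => by rw [Fin.succ_castSucc]; exact x.2)
      (fun x hx => Iff.rfl)
      (fun z hz => by
        have hz' : z ∈ F i.succ.castSucc := by rwa [Fin.succ_castSucc] at hz
        have hzV : z ∈ F (Fin.last m).castSucc :=
          h1.monotone (Fin.castSucc_le_castSucc_iff.mpr (Fin.le_last i.succ)) hz'
        exact ⟨⟨z, hzV⟩, hz', rfl⟩)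
    exact ss_mu_congr a b d P eq.symm hss hmu

/-- Drop the first step of a HN filtration. -/
lemma hn_dropFirst [IsNoetherian Λ X] [IsArtinian Λ X] {I : Set ℝ}
    (m : ℕ) (F : Fin (m + 2) → Submodule Λ X) (ts : Fin (m + 1) → ℝ)
    (h1 : StrictMono F) (h3 : F (Fin.last (m + 1)) = ⊤) (h4 : StrictMono ts)
    (h5 : ∀ i, ts i ∈ I)
    (h6 : ∀ i : Fin (m + 1),
      Semistable d a b (ts i)
        (↥(F i.succ) ⧸ Submodule.comap (F i.succ).subtype (F i.castSucc)) ∧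
      muZ a b (ts i)
        (d (↥(F i.succ) ⧸ Submodule.comap (F i.succ).subtype (F i.castSucc))) = ts i) :
    HNin d a b I (X ⧸ F (Fin.succ 0)) := by
  have hW₀le : ∀ i : Fin (m + 1), F (Fin.succ 0) ≤ F i.succ :=
    fun i => h1.monotone (Fin.succ_le_succ_iff.mpr (Fin.zero_le i))
  refine ⟨m, fun i => Submodule.map (F (Fin.succ 0)).mkQ (F i.succ), fun i => ts i.succ,
    ?_, ?_, ?_, ?_, ?_, ?_⟩
  · intro i j hij
    exact map_mkQ_strict (hW₀le i) (h1 (Fin.succ_lt_succ_iff.mpr hij))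
  · show Submodule.map (F (Fin.succ 0)).mkQ (F (Fin.succ 0)) = ⊥
    refine le_bot_iff.mp (Submodule.map_le_iff_le_comap.mpr ?_)
    rw [Submodule.comap_bot, Submodule.ker_mkQ]
  · show Submodule.map (F (Fin.succ 0)).mkQ (F (Fin.last m).succ) = ⊤
    rw [Fin.succ_last, h3, Submodule.map_top, Submodule.range_mkQ]
  · intro i j hij
    exact h4 (Fin.succ_lt_succ_iff.mpr hij)
  · intro i; exact h5 i.succ
  · intro i
    obtain ⟨hss, hmu⟩ := h6 i.succ
    rw [← Fin.succ_castSucc] at hss hmu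
    obtain ⟨eq⟩ := subquot_equiv (F (Fin.succ 0)).mkQ
      (F i.castSucc.succ) (F i.succ.succ)
      (Submodule.map (F (Fin.succ 0)).mkQ (F i.castSucc.succ))
      (Submodule.map (F (Fin.succ 0)).mkQ (F i.succ.succ))
      (fun x => Submodule.mem_map.mpr ⟨↑x, x.2, rfl⟩)
      (fun x hx => by
        constructor
        · intro hmem
          obtain ⟨u, hu, he⟩ := Submodule.mem_map.mp hmem
          have hsub : u - x ∈ F (Fin.succ 0) := (Submodule.Quotient.eq _).mp he
          have : u - x ∈ F i.castSucc.succ := hW₀le i.castSucc hsub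
          simpa using Submodule.sub_mem _ hu this
        · intro hmem; exact Submodule.mem_map.mpr ⟨x, hmem, rfl⟩)
      (fun z hz => Submodule.mem_map.mp hz)
    exact ss_mu_congr a b d P eq hss hmu

end Trunc
section Exist

omit P in
lemma hn_zero {X : Type} [AddCommGroup X] [Module Λ X] (hX : ∀ y : X, y = 0) (I : Set ℝ) :
    HNin d a b I X := by
  refine ⟨0, fun _ => ⊥, fun i => i.elim0, ?_, rfl, ?_, fun i => i.elim0, fun i => i.elim0,
    fun i => i.elim0⟩
  · intro i j hij
    exact absurd hij (by rw [Fin.lt_def]; omega)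
  · refine eq_top_iff.mpr ?_
    intro x _
    rw [hX x]; exact Submodule.zero_mem ⊥

omit P in
lemma hn_trivial {X : Type} [AddCommGroup X] [Module Λ X] {I : Set ℝ}
    (h : HNin d a b I X) (hI : I = ∅) : ∀ y : X, y = 0 := by
  obtain ⟨m, F, ts, h1, h2, h3, h4, h5, h6⟩ := h
  cases m with
  | zero =>
    intro y
    have h0 : F (Fin.last 0) = F 0 := rfl
    rw [h0, h2] at h3
    have : y ∈ (⊤ : Submodule Λ X) := Submodule.mem_top
    rw [← h3] at this
    simpa using this
  | succ m =>
    exact absurd (h5 0) (by rw [hI]; exact Set.notMem_empty _)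

lemma tone_attained (A : Type) [AddCommGroup A] [Module Λ A] [IsNoetherian Λ A] [IsArtinian Λ A]
    (hA : ∃ y : A, y ≠ 0) :
    ∃ Q : Submodule Λ A, Q ≠ ⊥ ∧ tzero a b (d ↥Q) = tone d a b A ∧
      ∀ R : Submodule Λ A, R ≠ ⊥ → tone d a b A ≤ tzero a b (d ↥R) := by
  set S : Set ℝ := {s | ∃ M' : Submodule Λ A, M' ≠ ⊥ ∧ s = tzero a b (d ↥M')} with hSdef
  have hd_le : ∀ Q : Submodule Λ A, d ↥Q ≤ d A := by
    intro Q i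
    exact Nat.le.intro (congrFun (P.hadd A Q) i)
  have hne : S.Nonempty := by
    refine ⟨tzero a b (d ↥(⊤ : Submodule Λ A)), ⊤, ?_, rfl⟩
    obtain ⟨y, hy⟩ := hA
    intro hc
    have : y ∈ (⊥ : Submodule Λ A) := by rw [← hc]; exact Submodule.mem_top
    exact hy (by simpa using this)
  have hfin : S.Finite := by
    refine Set.Finite.subset (Set.finite_coe_iff.mp ?_)
      (show S ⊆ ↑((Finset.Iic (d A)).image (fun w => tzero a b w)) from ?_)
    · exact Set.finite_coe_iff.mpr (Finset.finite_toSet _)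
    · rintro s ⟨Q, hQ, rfl⟩
      refine Finset.mem_coe.mpr (Finset.mem_image.mpr ⟨d ↥Q, ?_, rfl⟩)
      exact Finset.mem_Iic.mpr (hd_le Q)
  have hmem : tone d a b A ∈ S := by
    unfold tone
    exact Set.Nonempty.csInf_mem hne hfin
  obtain ⟨Q, hQ, hQs⟩ := hmem
  refine ⟨Q, hQ, hQs.symm, ?_⟩
  intro R hR
  exact csInf_le hfin.bddBelow ⟨R, hR, rfl⟩

/-- The dimension-vector identity relating a submodule sandwich `P ≤ R ⊆ A` to the
image of `R` in `A ⧸ P`. -/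
lemma dprod_quotient_sub {A : Type} [AddCommGroup A] [Module Λ A] [IsNoetherian Λ A]
    [IsArtinian Λ A] {Pm R : Submodule Λ A} (hPR : Pm ≤ R) (x : Fin n → ℝ) :
    dprod x (d ↥R) = dprod x (d ↥Pm) + dprod x (d ↥(R.map Pm.mkQ)) := by
  have e1 : d ↥(Submodule.comap R.subtype Pm) = d ↥Pm :=
    P.hiso _ _ (Submodule.comapSubtypeEquivOfLe hPR)
  have hmem : ∀ x : ↥R, Pm.mkQ ↑x ∈ R.map Pm.mkQ :=
    fun x => Submodule.mem_map.mpr ⟨↑x, x.2, rfl⟩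
  set ψ : ↥R →ₗ[Λ] ↥(R.map Pm.mkQ) :=
    LinearMap.codRestrict _ (Pm.mkQ.comp R.subtype) hmem with hψ
  have hsurj : Function.Surjective ψ := by
    rintro ⟨z, hz⟩
    obtain ⟨x, hxR, rfl⟩ := Submodule.mem_map.mp hz
    exact ⟨⟨x, hxR⟩, rfl⟩
  have hk : LinearMap.ker ψ = Submodule.comap R.subtype Pm := by
    ext x
    simp only [hψ, LinearMap.mem_ker, Submodule.mem_comap, Submodule.coe_subtype]
    constructor
    · intro hx
      have := congrArg Subtype.val hx
      have h' : Pm.mkQ (x : A) = 0 := this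
      exact (Submodule.Quotient.mk_eq_zero Pm).mp h'
    · intro hx
      apply Subtype.ext
      show Pm.mkQ (x : A) = 0
      exact (Submodule.Quotient.mk_eq_zero Pm).mpr hx
  have e2 : d ↥(R.map Pm.mkQ) = d (↥R ⧸ Submodule.comap R.subtype Pm) :=
    (P.hiso _ _ (quotEquivOfSurj ψ hsurj _ hk)).symm
  rw [e2, e1.symm, dprod_d_add a b d P ↥R (Submodule.comap R.subtype Pm) x]

end Exist
section Exist2

omit P in
lemma map_mkQ_self_bot {A : Type} [AddCommGroup A] [Module Λ A] (K : Submodule Λ A) :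
    Submodule.map K.mkQ K = ⊥ :=
  le_bot_iff.mp (Submodule.map_le_iff_le_comap.mpr
    (by rw [Submodule.comap_bot, Submodule.ker_mkQ]))

lemma exists_split (t₀ : ℝ) : ∀ (k : ℕ) (A : Type) [AddCommGroup A] [Module Λ A]
    [IsNoetherian Λ A] [IsArtinian Λ A], (∑ i, d A i ≤ k) → ∀ c : ℝ,
    (∀ Q : Submodule Λ A, Q ≠ ⊥ → c < tzero a b (d ↥Q)) →
    ∃ N : Submodule Λ A, HNin d a b (Set.Ioc c t₀) ↥N ∧
      HNin d a b (Set.Ioi (max t₀ c)) (A ⧸ N) := by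
  have hzcase : ∀ (A : Type) [AddCommGroup A] [Module Λ A] [IsNoetherian Λ A] [IsArtinian Λ A],
      (∀ y : A, y = 0) → ∀ c : ℝ,
      ∃ N : Submodule Λ A, HNin d a b (Set.Ioc c t₀) ↥N ∧
        HNin d a b (Set.Ioi (max t₀ c)) (A ⧸ N) := by
    intro A _ _ _ _ hA0 c
    refine ⟨⊥, hn_zero a b d (fun y => Subtype.ext ((Submodule.mem_bot Λ).mp y.2)) _,
      hn_zero a b d ?_ _⟩
    intro y
    obtain ⟨x, rfl⟩ := Submodule.Quotient.mk_surjective _ y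
    rw [hA0 x]
    rfl
  intro k
  induction k with
  | zero =>
    intro A _ _ _ _ hk c _
    have hdA : d A = 0 := by
      funext i
      exact Finset.sum_eq_zero_iff.mp (Nat.le_zero.mp hk) i (Finset.mem_univ i)
    exact hzcase A ((P.hzero A).mp hdA) c
  | succ k IH =>
    intro A _ _ _ _ hk c hc
    by_cases hA0 : ∀ y : A, y = 0
    · exact hzcase A hA0 c
    · push_neg at hA0
      obtain ⟨Q₁, hQ₁ne, hQ₁tz, hτmin⟩ := tone_attained a b d P A hA0
      set τ := tone d a b A with hτdef
      have hcτ : c < τ := hQ₁tz ▸ hc Q₁ hQ₁ne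
      have hmuall : ∀ R : Submodule Λ A, R ≠ ⊥ → τ ≤ muZ a b τ (d ↥R) := fun R hR =>
        mu_ge_of_le_tzero a b d P (d_sub_ne_zero a b d P hR) (hτmin R hR)
      have hQ₁mu : muZ a b τ (d ↥Q₁) = τ := by
        have h1 := (tzero_spec a b P.hC1a P.hC1b P.hbpos P.hconst
          (d_sub_ne_zero a b d P hQ₁ne)).1
        rw [hQ₁tz] at h1; exact h1
      obtain ⟨Pm, hPmS, hPmmax⟩ := (IsWellFounded.wf
        (r := ((· > ·) : Submodule Λ A → Submodule Λ A → Prop))).has_min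
        {Pp : Submodule Λ A | Pp ≠ ⊥ ∧ muZ a b τ (d ↥Pp) = τ} ⟨Q₁, hQ₁ne, hQ₁mu⟩
      obtain ⟨hPmne, hPmmu⟩ := hPmS
      have ssPm : Semistable d a b τ ↥Pm := by
        intro Q hQ
        have hdQ : d ↥Q = d ↥(Q.map Pm.subtype) := d_map_subtype a b d P Pm Q
        rw [hPmmu, hdQ]
        exact hmuall _ (map_subtype_ne_bot a b d P hQ)
      have hdPm := d_sub_ne_zero a b d P hPmne
      have h1b : 0 < dprod (b τ) (d ↥Pm) := dprod_pos (P.hbpos τ) hdPm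
      have hstep : ∀ D : Submodule Λ (A ⧸ Pm), D ≠ ⊥ → τ ≤ muZ a b τ (d ↥D) := by
        intro D hD
        set R := Submodule.comap Pm.mkQ D with hRdef
        have hPR : Pm ≤ R := by
          intro x hx
          show Pm.mkQ x ∈ D
          rw [Submodule.mkQ_apply, (Submodule.Quotient.mk_eq_zero Pm).mpr hx]
          exact Submodule.zero_mem D
        have hRne : R ≠ ⊥ := fun hh => hPmne (le_bot_iff.mp (hh ▸ hPR))
        have hmapD : R.map Pm.mkQ = D :=
          Submodule.map_comap_eq_of_surjective Pm.mkQ_surjective D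
        have hdD := d_sub_ne_zero a b d P hD
        have h2b : 0 < dprod (b τ) (d ↥D) := dprod_pos (P.hbpos τ) hdD
        have hadd1 := dprod_quotient_sub a b d P hPR (a τ)
        have hadd2 := dprod_quotient_sub a b d P hPR (b τ)
        rw [hmapD] at hadd1 hadd2
        have hSS : τ ≤ muZ a b τ (d ↥R) := hmuall R hRne
        unfold muZ at hSS ⊢
        rw [hadd1, hadd2] at hSS
        exact seesaw_aux2 h1b h2b hPmmu hSS
      have hstep2 : ∀ D : Submodule Λ (A ⧸ Pm), D ≠ ⊥ → τ < tzero a b (d ↥D) := by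
        intro D hD
        rcases lt_or_eq_of_le (Lstar a b d P (A ⧸ Pm) τ hstep D hD) with h | h
        · exact h
        exfalso
        have hdD := d_sub_ne_zero a b d P hD
        have h2b : 0 < dprod (b τ) (d ↥D) := dprod_pos (P.hbpos τ) hdD
        have hDmu : muZ a b τ (d ↥D) = τ := by
          have h1 := (tzero_spec a b P.hC1a P.hC1b P.hbpos P.hconst hdD).1
          rw [← h] at h1; exact h1
        set R := Submodule.comap Pm.mkQ D with hRdef
        have hPR : Pm ≤ R := by
          intro x hx
          show Pm.mkQ x ∈ D
          rw [Submodule.mkQ_apply, (Submodule.Quotient.mk_eq_zero Pm).mpr hx]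
          exact Submodule.zero_mem D
        have hRne : R ≠ ⊥ := fun hh => hPmne (le_bot_iff.mp (hh ▸ hPR))
        have hmapD : R.map Pm.mkQ = D :=
          Submodule.map_comap_eq_of_surjective Pm.mkQ_surjective D
        have hadd1 := dprod_quotient_sub a b d P hPR (a τ)
        have hadd2 := dprod_quotient_sub a b d P hPR (b τ)
        rw [hmapD] at hadd1 hadd2
        have hθPm : dprod (a τ) (d ↥Pm) = τ * dprod (b τ) (d ↥Pm) := by
          have h1 := hPmmu
          unfold muZ at h1
          rw [div_eq_iff h1b.ne'] at h1; exact h1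
        have hθD : dprod (a τ) (d ↥D) = τ * dprod (b τ) (d ↥D) := by
          have h1 := hDmu
          unfold muZ at h1
          rw [div_eq_iff h2b.ne'] at h1; exact h1
        have hRmu : muZ a b τ (d ↥R) = τ := by
          unfold muZ
          rw [hadd1, hadd2, hθPm, hθD, div_eq_iff (add_pos h1b h2b).ne']
          ring
        have hRgt : Pm < R := by
          refine lt_of_le_of_ne hPR ?_
          intro he
          apply hD
          rw [← hmapD, ← he, map_mkQ_self_bot]
        exact hPmmax R ⟨hRne, hRmu⟩ hRgt
      have hdsum : ∑ i, d (A ⧸ Pm) i ≤ k := by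
        have hs := congrArg (fun w => ∑ i, w i) (P.hadd A Pm)
        simp only [Pi.add_apply, Finset.sum_add_distrib] at hs
        have hpos : 0 < ∑ i, d ↥Pm i := by
          rcases Function.ne_iff.mp hdPm with ⟨i, hi⟩
          exact Finset.sum_pos' (fun _ _ => Nat.zero_le _)
            ⟨i, Finset.mem_univ i, Nat.pos_of_ne_zero hi⟩
        omega
      obtain ⟨N', hn1, hn2⟩ := IH (A ⧸ Pm) hdsum τ hstep2
      set N := Submodule.comap Pm.mkQ N' with hNdef
      have hPN : Pm ≤ N := by
        intro x hx
        show Pm.mkQ x ∈ N'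
        rw [Submodule.mkQ_apply, (Submodule.Quotient.mk_eq_zero Pm).mpr hx]
        exact Submodule.zero_mem N'
      have hmapN : N.map Pm.mkQ = N' :=
        Submodule.map_comap_eq_of_surjective Pm.mkQ_surjective N'
      rcases le_or_gt τ t₀ with hτt₀ | hτt₀
      · -- τ ≤ t₀ : N is the torsion part
        refine ⟨N, ?_, ?_⟩
        · have hmem : ∀ x : ↥N, Pm.mkQ ↑x ∈ N' := fun x => x.2
          set ψ : ↥N →ₗ[Λ] ↥N' :=
            LinearMap.codRestrict _ (Pm.mkQ.comp N.subtype) hmem with hψ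
          have hsurj : Function.Surjective ψ := by
            rintro ⟨z, hz⟩
            obtain ⟨x, rfl⟩ := Pm.mkQ_surjective z
            exact ⟨⟨x, hz⟩, rfl⟩
          have hkψ : LinearMap.ker ψ = Submodule.comap N.subtype Pm := by
            ext x
            simp only [hψ, LinearMap.mem_ker, Submodule.mem_comap, Submodule.coe_subtype,
              LinearMap.codRestrict_apply, LinearMap.comp_apply]
            constructor
            · intro hx
              have h2 := congrArg Subtype.val hx
              have h' : Pm.mkQ (x : A) = 0 := h2
              exact (Submodule.Quotient.mk_eq_zero Pm).mp h'
            · intro hx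
              apply Subtype.ext
              show Pm.mkQ (x : A) = 0
              exact (Submodule.Quotient.mk_eq_zero Pm).mpr hx
          have hkerne : LinearMap.ker ψ ≠ ⊥ := by
            rw [hkψ]
            obtain ⟨y, hyPm, hy⟩ := (Submodule.ne_bot_iff Pm).mp hPmne
            exact (Submodule.ne_bot_iff _).mpr ⟨⟨y, hPN hyPm⟩, hyPm,
              fun hc2 => hy (by simpa using congrArg Subtype.val hc2)⟩
          obtain ⟨ssK, muK⟩ :=
            ss_mu_congr a b d P (Submodule.comapSubtypeEquivOfLe hPN).symm ssPm hPmmu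
          rw [← hkψ] at ssK muK
          refine hn_prepend a b d P ψ hsurj τ hkerne ssK muK ⟨hcτ, hτt₀⟩ ?_
          refine hn_mono a b d ?_ hn1
          rintro w ⟨hw1, hw2⟩
          exact ⟨⟨hcτ.trans hw1, hw2⟩, hw1⟩
        · have e1 : ((A ⧸ Pm) ⧸ N') ≃ₗ[Λ] ((A ⧸ Pm) ⧸ Submodule.map Pm.mkQ N) :=
            Submodule.quotEquivOfEq _ _ hmapN.symm
          have e2 := Submodule.quotientQuotientEquivQuotient Pm N hPN
          refine hn_congr a b d P (e1.trans e2) (hn_mono a b d ?_ hn2)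
          intro w hw
          have hwt₀ : t₀ < w := lt_of_le_of_lt (le_max_left t₀ τ) hw
          exact max_lt hwt₀ (lt_trans (hcτ.trans_le hτt₀) hwt₀)
      · -- τ > t₀ : torsion part is trivial
        have hN'z : ∀ y : ↥N', y = 0 :=
          hn_trivial a b d hn1 (Set.Ioc_eq_empty (by exact fun hlt => absurd hlt (not_lt.mpr hτt₀.le)))
        have hN'bot : N' = ⊥ := by
          ext x
          simp only [Submodule.mem_bot]
          constructor
          · intro hx
            have := congrArg Subtype.val (hN'z ⟨x, hx⟩)
            simpa using this
          · rintro rfl; exact Submodule.zero_mem N'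
        refine ⟨⊥, hn_zero a b d (fun y => Subtype.ext ((Submodule.mem_bot Λ).mp y.2)) _, ?_⟩
        have hApre : HNin d a b (Set.Ioi (max t₀ c)) A := by
          have hkerPm : Pm = LinearMap.ker Pm.mkQ := (Submodule.ker_mkQ Pm).symm
          obtain ⟨ssK, muK⟩ :=
            ss_mu_congr a b d P (LinearEquiv.ofEq _ _ hkerPm) ssPm hPmmu
          refine hn_prepend a b d P Pm.mkQ Pm.mkQ_surjective τ
            (by rw [Submodule.ker_mkQ]; exact hPmne) ssK muK
            (Set.mem_Ioi.mpr (max_lt hτt₀ hcτ)) ?_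
          have hA' : HNin d a b (Set.Ioi (max t₀ τ)) (A ⧸ Pm) :=
            hn_congr a b d P (Submodule.quotEquivOfEqBot N' hN'bot) hn2
          refine hn_mono a b d ?_ hA'
          intro w hw
          have hwτ : τ < w := lt_of_le_of_lt (le_max_right t₀ τ) hw
          have hwt₀ : t₀ < w := lt_of_le_of_lt (le_max_left t₀ τ) hw
          exact ⟨max_lt hwt₀ (hcτ.trans hwτ), hwτ⟩
        exact hn_congr a b d P (Submodule.quotEquivOfEqBot ⊥ rfl).symm hApre

end Exist2
section Hom

omit P in
lemma quot_denom_bot_equiv {X : Type} [AddCommGroup X] [Module Λ X]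
    {V C : Submodule Λ X} (hC : C = ⊥) :
    Nonempty ((↥V ⧸ Submodule.comap V.subtype C) ≃ₗ[Λ] ↥V) := by
  subst hC
  refine ⟨Submodule.quotEquivOfEqBot _ ?_⟩
  rw [Submodule.comap_bot, Submodule.ker_subtype]

omit P in
lemma triv_of_hn_zero_steps {X : Type} [AddCommGroup X] [Module Λ X]
    {F : Fin 1 → Submodule Λ X} (h2 : F 0 = ⊥) (h3 : F (Fin.last 0) = ⊤) :
    ∀ y : X, y = 0 := by
  intro y
  have h0 : F (Fin.last 0) = F 0 := rfl
  rw [h0, h2] at h3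
  have hy : y ∈ (⊤ : Submodule Λ X) := Submodule.mem_top
  rw [← h3] at hy
  simpa using hy

lemma key_hom {S B' : Type} [AddCommGroup S] [Module Λ S] [IsNoetherian Λ S] [IsArtinian Λ S]
    [AddCommGroup B'] [Module Λ B'] [IsNoetherian Λ B'] [IsArtinian Λ B']
    {s t : ℝ} (hst : s < t)
    (hS : Semistable d a b s S) (hSmu : muZ a b s (d S) = s)
    (hB : Semistable d a b t B') (hBmu : muZ a b t (d B') = t)
    (f : S →ₗ[Λ] B') : f = 0 := by
  by_contra hf
  have hI : LinearMap.range f ≠ ⊥ := by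
    intro h
    apply hf
    ext x
    have hx : f x ∈ LinearMap.range f := ⟨x, rfl⟩
    rw [h] at hx
    simpa using hx
  have htz := tz_ge_of_ss a b d P B' t hB hBmu (LinearMap.range f) hI
  have hdI := d_sub_ne_zero a b d P hI
  have hmuI : s < muZ a b s (d ↥(LinearMap.range f)) := by
    have h2 := (tzero_spec a b P.hC1a P.hC1b P.hbpos P.hconst hdI).2
    exact h2 s (lt_of_lt_of_le hst htz)
  have hdq : d (S ⧸ LinearMap.ker f) = d ↥(LinearMap.range f) :=
    P.hiso _ _ f.quotKerEquivRange
  by_cases hker : LinearMap.ker f = ⊥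
  · have hds : d S = d (S ⧸ LinearMap.ker f) :=
      P.hiso _ _ (Submodule.quotEquivOfEqBot _ hker).symm
    rw [hds, hdq] at hSmu
    linarith
  · have hsk : s ≤ muZ a b s (d ↥(LinearMap.ker f)) := by
      have hh := hS _ hker
      rw [hSmu] at hh; exact hh
    have h1 : 0 < dprod (b s) (d ↥(LinearMap.ker f)) :=
      dprod_pos (P.hbpos s) (d_sub_ne_zero a b d P hker)
    have h2 : 0 < dprod (b s) (d (S ⧸ LinearMap.ker f)) := by
      rw [hdq]; exact dprod_pos (P.hbpos s) hdI
    have ha1 := dprod_d_add a b d P S (LinearMap.ker f) (a s)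
    have ha2 := dprod_d_add a b d P S (LinearMap.ker f) (b s)
    have hSmu' : (dprod (a s) (d ↥(LinearMap.ker f)) + dprod (a s) (d (S ⧸ LinearMap.ker f))) /
        (dprod (b s) (d ↥(LinearMap.ker f)) + dprod (b s) (d (S ⧸ LinearMap.ker f))) = s := by
      rw [← ha1, ← ha2]; exact hSmu
    have hq := seesaw_aux h1 h2 (by unfold muZ at hsk; exact hsk) hSmu'
    rw [hdq] at hq
    unfold muZ at hmuI
    linarith

lemma hom_ss_to_hn (t₀ : ℝ) : ∀ (k : ℕ) (B : Type) [AddCommGroup B] [Module Λ B]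
    [IsNoetherian Λ B] [IsArtinian Λ B], (∑ i, d B i ≤ k) →
    HNin d a b (Set.Ioi t₀) B →
    ∀ (S : Type) [AddCommGroup S] [Module Λ S] [IsNoetherian Λ S] [IsArtinian Λ S]
      (s : ℝ), s ≤ t₀ → Semistable d a b s S → muZ a b s (d S) = s →
    ∀ f : S →ₗ[Λ] B, f = 0 := by
  intro k
  induction k with
  | zero =>
    intro B _ _ _ _ hk _ S _ _ _ _ s _ _ _ f
    have hdB : d B = 0 := by
      funext i
      exact Finset.sum_eq_zero_iff.mp (Nat.le_zero.mp hk) i (Finset.mem_univ i)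
    have hB0 := (P.hzero B).mp hdB
    ext x
    rw [hB0 (f x)]; rfl
  | succ k IHk =>
    intro B _ _ _ _ hk hHN S _ _ _ _ s hst₀ hssS hmuS f
    obtain ⟨m, F, ts, h1, h2, h3, h4, h5, h6⟩ := hHN
    cases m with
    | zero =>
      have hB0 := triv_of_hn_zero_steps h2 h3
      ext x
      rw [hB0 (f x)]; rfl
    | succ m =>
      -- the top quotient of B
      have htop : F (Fin.last m).succ = ⊤ := by rw [Fin.succ_last]; exact h3
      obtain ⟨hsstop, hmutop⟩ := h6 (Fin.last m)
      set V := F (Fin.last m).castSucc with hVdef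
      set ψ : ↥(F (Fin.last m).succ) →ₗ[Λ] B ⧸ V :=
        V.mkQ.comp (F (Fin.last m).succ).subtype with hψ
      have hsurj : Function.Surjective ψ := by
        intro z
        obtain ⟨x, rfl⟩ := V.mkQ_surjective z
        exact ⟨⟨x, by rw [htop]; exact Submodule.mem_top⟩, rfl⟩
      have hkψ : LinearMap.ker ψ = Submodule.comap (F (Fin.last m).succ).subtype V := by
        ext x
        simp only [hψ, LinearMap.mem_ker, Submodule.mem_comap, LinearMap.comp_apply,
          Submodule.coe_subtype, Submodule.mkQ_apply, Submodule.Quotient.mk_eq_zero]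
      obtain ⟨ssq, muq⟩ := ss_mu_congr a b d P (quotEquivOfSurj ψ hsurj _ hkψ) hsstop hmutop
      -- the composite S → B → B/V vanishes
      have hcomp : V.mkQ.comp f = 0 :=
        key_hom a b d P (lt_of_le_of_lt hst₀ (h5 (Fin.last m))) hssS hmuS ssq muq _
      have hrange : ∀ x : S, f x ∈ V := by
        intro x
        have hx := congrFun (congrArg (fun g => g.toFun) hcomp) x
        simpa [Submodule.Quotient.mk_eq_zero] using hx
      -- factor through V and use the truncated filtration
      set f' : S →ₗ[Λ] ↥V := LinearMap.codRestrict V f hrange with hf'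
      have hVsum : ∑ i, d ↥V i ≤ k := by
        have hVtop : V ≠ ⊤ := by
          intro he
          have := h1 (Fin.castSucc_lt_last (Fin.last m))
          rw [← hVdef] at this
          rw [he, h3] at this
          exact lt_irrefl _ this
        have hqne : ∃ y : B ⧸ V, y ≠ 0 := by
          have hVlt : V < (⊤ : Submodule Λ B) := lt_top_iff_ne_top.mpr hVtop
          obtain ⟨x, hxT, hxV⟩ := SetLike.exists_of_lt hVlt
          exact ⟨V.mkQ x, by simpa [Submodule.Quotient.mk_eq_zero] using hxV⟩
        have hdquot : d (B ⧸ V) ≠ 0 := d_ne_zero a b d P _ hqne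
        have hs := congrArg (fun w => ∑ i, w i) (P.hadd B V)
        simp only [Pi.add_apply, Finset.sum_add_distrib] at hs
        have hpos : 0 < ∑ i, d (B ⧸ V) i := by
          rcases Function.ne_iff.mp hdquot with ⟨i, hi⟩
          exact Finset.sum_pos' (fun _ _ => Nat.zero_le _)
            ⟨i, Finset.mem_univ i, Nat.pos_of_ne_zero hi⟩
        omega
      have hVHN : HNin d a b (Set.Ioi t₀) ↥V :=
        hn_dropLast a b d P m F ts h1 h2 h4 h5 h6
      have hf'0 : f' = 0 := IHk ↥V hVsum hVHN S s hst₀ hssS hmuS f'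
      ext x
      have : f x = ↑(f' x) := rfl
      rw [this, hf'0]
      rfl

lemma hom_hn_hn (t₀ : ℝ) : ∀ (k : ℕ) (A : Type) [AddCommGroup A] [Module Λ A]
    [IsNoetherian Λ A] [IsArtinian Λ A], (∑ i, d A i ≤ k) →
    HNin d a b (Set.Iic t₀) A →
    ∀ (B : Type) [AddCommGroup B] [Module Λ B] [IsNoetherian Λ B] [IsArtinian Λ B],
    HNin d a b (Set.Ioi t₀) B → ∀ f : A →ₗ[Λ] B, f = 0 := by
  intro k
  induction k with
  | zero =>
    intro A _ _ _ _ hk _ B _ _ _ _ _ f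
    have hdA : d A = 0 := by
      funext i
      exact Finset.sum_eq_zero_iff.mp (Nat.le_zero.mp hk) i (Finset.mem_univ i)
    have hA0 := (P.hzero A).mp hdA
    ext x
    rw [hA0 x]
    exact map_zero f
  | succ k IHk =>
    intro A _ _ _ _ hk hHNA B _ _ _ _ hHNB f
    obtain ⟨m, F, ts, h1, h2, h3, h4, h5, h6⟩ := hHNA
    cases m with
    | zero =>
      have hA0 := triv_of_hn_zero_steps h2 h3
      ext x
      rw [hA0 x]
      exact map_zero f
    | succ m =>
      obtain ⟨eqv⟩ := quot_denom_bot_equiv (V := F (Fin.succ 0)) (C := F (Fin.castSucc 0))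
        (by rw [Fin.castSucc_zero]; exact h2)
      obtain ⟨ssA₁, muA₁⟩ := ss_mu_congr a b d P eqv (h6 0).1 (h6 0).2
      have hg : f.comp (F (Fin.succ 0)).subtype = 0 :=
        hom_ss_to_hn a b d P t₀ (∑ i, d B i) B le_rfl hHNB ↥(F (Fin.succ 0))
          (ts 0) (h5 0) ssA₁ muA₁ _
      have hle : F (Fin.succ 0) ≤ LinearMap.ker f := by
        intro x hx
        have := congrFun (congrArg (fun g => g.toFun) hg) ⟨x, hx⟩
        exact this
      have hsum : ∑ i, d (A ⧸ F (Fin.succ 0)) i ≤ k := by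
        have hA₁ne : F (Fin.succ 0) ≠ ⊥ := by
          have hlt : F 0 < F (Fin.succ 0) := by
            have h0 : (0 : Fin (m + 2)) = Fin.castSucc 0 := by rw [Fin.castSucc_zero]
            rw [h0]
            exact h1 (Fin.castSucc_lt_succ (i := 0))
          rw [h2] at hlt
          exact (bot_lt_iff_ne_bot.mp hlt)
        have hd1 := d_sub_ne_zero a b d P hA₁ne
        have hs := congrArg (fun w => ∑ i, w i) (P.hadd A (F (Fin.succ 0)))
        simp only [Pi.add_apply, Finset.sum_add_distrib] at hs
        have hpos : 0 < ∑ i, d ↥(F (Fin.succ 0)) i := by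
          rcases Function.ne_iff.mp hd1 with ⟨i, hi⟩
          exact Finset.sum_pos' (fun _ _ => Nat.zero_le _)
            ⟨i, Finset.mem_univ i, Nat.pos_of_ne_zero hi⟩
        omega
      have hQHN : HNin d a b (Set.Iic t₀) (A ⧸ F (Fin.succ 0)) :=
        hn_dropFirst a b d P m F ts h1 h3 h4 h5 h6
      have hlift := IHk (A ⧸ F (Fin.succ 0)) hsum hQHN B hHNB
        ((F (Fin.succ 0)).liftQ f hle)
      ext x
      have hfx : f x = ((F (Fin.succ 0)).liftQ f hle) ((F (Fin.succ 0)).mkQ x) := by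
        have hcomp := Submodule.liftQ_mkQ (F (Fin.succ 0)) f hle
        exact (congrFun (congrArg (fun g : A →ₗ[Λ] B => ⇑g) hcomp) x).symm
      rw [hfx, hlift]
      rfl

end Hom

end Stmt10Aux

/-- For a green nonlinear stability function `Z_•` and any `t₀ ∈ ℝ`, the
pair `(S_Z(−∞,t₀], S_Z(t₀,∞))` is a torsion pair in `mod-Λ`: Hom vanishes from the first
class to the second, a module lies in the first class iff it has no nonzero quotient in
the second, and a module lies in the second class iff it has no nonzero submodule in the
first. -/
theorem stmt10 (Λ : Type) [Ring Λ] {n : ℕ}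
    (d : (N : Type) → [AddCommGroup N] → [Module Λ N] → Fin n → ℕ)
    (hiso : ∀ (N N' : Type) [AddCommGroup N] [Module Λ N] [AddCommGroup N'] [Module Λ N']
      [IsNoetherian Λ N] [IsArtinian Λ N], (N ≃ₗ[Λ] N') → d N = d N')
    (hadd : ∀ (N : Type) [AddCommGroup N] [Module Λ N] [IsNoetherian Λ N] [IsArtinian Λ N]
      (A : Submodule Λ N), d ↥A + d (N ⧸ A) = d N)
    (hzero : ∀ (N : Type) [AddCommGroup N] [Module Λ N] [IsNoetherian Λ N] [IsArtinian Λ N],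
      (d N = 0 ↔ ∀ y : N, y = 0))
    (a b : ℝ → Fin n → ℝ)
    (hbpos : ∀ t i, 0 < b t i)
    (hC1a : ∀ i, ContDiff ℝ 1 (fun t => a t i))
    (hC1b : ∀ i, ContDiff ℝ 1 (fun t => b t i))
    (hconst : ∃ T : ℝ, 0 < T ∧ (∀ t, T ≤ t → a t = a T ∧ b t = b T) ∧
      (∀ t, t ≤ -T → a t = a (-T) ∧ b t = b (-T)))
    (hgreen : ZGreen d a b)
    (t₀ : ℝ) :
    (∀ (A B : Type) [AddCommGroup A] [Module Λ A] [IsNoetherian Λ A] [IsArtinian Λ A]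
        [AddCommGroup B] [Module Λ B] [IsNoetherian Λ B] [IsArtinian Λ B],
      HNin d a b (Set.Iic t₀) A → HNin d a b (Set.Ioi t₀) B →
        ∀ f : A →ₗ[Λ] B, f = 0) ∧
    (∀ (A : Type) [AddCommGroup A] [Module Λ A] [IsNoetherian Λ A] [IsArtinian Λ A],
      HNin d a b (Set.Iic t₀) A ↔
        ∀ N : Submodule Λ A, N ≠ ⊤ → ¬ HNin d a b (Set.Ioi t₀) (A ⧸ N)) ∧
    (∀ (B : Type) [AddCommGroup B] [Module Λ B] [IsNoetherian Λ B] [IsArtinian Λ B],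
      HNin d a b (Set.Ioi t₀) B ↔
        ∀ N : Submodule Λ B, N ≠ ⊥ → ¬ HNin d a b (Set.Iic t₀) ↥N) := by
  have P : GreenPack d a b := ⟨hiso, hadd, hzero, hbpos, hC1a, hC1b, hconst, hgreen⟩
  have getc : ∀ (A : Type) [AddCommGroup A] [Module Λ A] [IsNoetherian Λ A] [IsArtinian Λ A],
      ∃ c : ℝ, c ≤ t₀ ∧ ∀ Q : Submodule Λ A, Q ≠ ⊥ → c < tzero a b (d ↥Q) := by
    intro A _ _ _ _
    by_cases hA : ∀ y : A, y = 0
    · refine ⟨t₀, le_rfl, fun Q hQ => absurd ?_ hQ⟩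
      ext x
      simp only [Submodule.mem_bot]
      constructor
      · intro _; exact hA x
      · rintro rfl; exact Q.zero_mem
    · push_neg at hA
      obtain ⟨Q₁, hQ₁ne, hQ₁tz, hmin⟩ := tone_attained a b d P A hA
      refine ⟨min t₀ (tone d a b A - 1), min_le_left _ _, ?_⟩
      intro Q hQ
      have h1 : tone d a b A ≤ tzero a b (d ↥Q) := hmin Q hQ
      have h2 := min_le_right t₀ (tone d a b A - 1)
      linarith
  refine ⟨?_, ?_, ?_⟩
  · intro A B _ _ _ _ _ _ _ _ hA hB f
    exact hom_hn_hn a b d P t₀ (∑ i, d A i) A le_rfl hA B hB f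
  · intro A _ _ _ _
    constructor
    · intro hA N hN hQ
      have h0 := hom_hn_hn a b d P t₀ (∑ i, d A i) A le_rfl hA (A ⧸ N) hQ N.mkQ
      have hNlt : N < ⊤ := lt_top_iff_ne_top.mpr hN
      obtain ⟨x, _, hxN⟩ := SetLike.exists_of_lt hNlt
      have hx0 : N.mkQ x = 0 := by rw [h0]; rfl
      exact hxN ((Submodule.Quotient.mk_eq_zero N).mp hx0)
    · intro h
      obtain ⟨c, hct₀, hc⟩ := getc A
      obtain ⟨N, hn1, hn2⟩ := exists_split a b d P t₀ (∑ i, d A i) A le_rfl c hc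
      rw [max_eq_left hct₀] at hn2
      by_cases hN : N = ⊤
      · subst hN
        exact hn_congr a b d P Submodule.topEquiv (hn_mono a b d Set.Ioc_subset_Iic_self hn1)
      · exact absurd hn2 (h N hN)
  · intro B _ _ _ _
    constructor
    · intro hB N hN hsub
      have h0 := hom_hn_hn a b d P t₀ (∑ i, d ↥N i) ↥N le_rfl hsub B hB N.subtype
      obtain ⟨y, hy⟩ := exists_ne_zero_of_ne_bot hN
      apply hy
      apply Subtype.ext
      have hy0 : N.subtype y = 0 := by rw [h0]; rfl
      simpa using hy0
    · intro h
      obtain ⟨c, hct₀, hc⟩ := getc B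
      obtain ⟨N, hn1, hn2⟩ := exists_split a b d P t₀ (∑ i, d B i) B le_rfl c hc
      rw [max_eq_left hct₀] at hn2
      by_cases hN : N = ⊥
      · subst hN
        exact hn_congr a b d P (Submodule.quotEquivOfEqBot ⊥ rfl) hn2
      · exact absurd (hn_mono a b d Set.Ioc_subset_Iic_self hn1) (h N hN)
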